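/- arXiv:1706.05285 — 2 statements merged into one kernel-verified Lean document; each statement's English description precedes it below -/
import Mathlib

section
/- Let g : ℝⁿ → ℝ be C² and let x₀ be such that the Hessian H(x₀) has n₊ ≥ 1 positive eigenvalues with corresponding eigenvector matrix V₊, and suppose V₊ᵀ∇g(x₀) ≠ 0. Then the direction v = −(H₊(x₀))†∇g(x₀) satisfies vᵀ∇g(x₀) < 0 and vᵀH(x₀)∇g(x₀) < 0, hence there exists α > 0 such that both g(x₀ + αv) < g(x₀) and G(x₀ + αv) < G(x₀), where G = ½‖∇g‖². -/
open RealInnerProductSpace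

/-- If a real function on ℝ has negative derivative at 0, it eventually decreases
to the right. -/
lemma eventually_lt_of_hasDerivAt_neg {φ : ℝ → ℝ} {d : ℝ}
    (hφ : HasDerivAt φ d 0) (hd : d < 0) :
    ∀ᶠ α in nhdsWithin (0:ℝ) (Set.Ioi 0), φ α < φ 0 := by
  have h1 := hasDerivAt_iff_tendsto_slope.1 hφ
  have h2 : ∀ᶠ α in nhdsWithin (0:ℝ) {(0:ℝ)}ᶜ, slope φ 0 α < 0 :=
    h1.eventually_lt_const hd
  have hle : nhdsWithin (0:ℝ) (Set.Ioi 0) ≤ nhdsWithin (0:ℝ) {(0:ℝ)}ᶜ :=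
    nhdsWithin_mono 0 (fun x hx => ne_of_gt hx)
  filter_upwards [h2.filter_mono hle, self_mem_nhdsWithin] with α hs hα
  have hα' : (0:ℝ) < α := hα
  rw [slope_def_field] at hs
  have : (φ α - φ 0) / α < 0 := by simpa using hs
  have := (div_neg_iff.1 this)
  rcases this with ⟨h, h'⟩ | ⟨h, h'⟩
  · linarith
  · linarith

/-- Double-descent direction in an indefinite region: if the Hessian `H x₀` has at
least one positive eigenvalue and `V₊ᵀ ∇g x₀ ≠ 0`, then `v = -(H₊(x₀))† ∇g x₀`
satisfies `vᵀ ∇g x₀ < 0` and `vᵀ H(x₀) ∇g x₀ < 0`, hence there is `α > 0` with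
`g (x₀ + α v) < g x₀` and `G (x₀ + α v) < G x₀`, where `G = ½‖∇g‖²`. -/
theorem stmt_11 {n : ℕ} (g : EuclideanSpace ℝ (Fin n) → ℝ)
    (hg : ContDiff ℝ 2 g)
    (H : EuclideanSpace ℝ (Fin n) → Matrix (Fin n) (Fin n) ℝ)
    (hH : ∀ x, HasFDerivAt (gradient g) (Matrix.toEuclideanCLM (𝕜 := ℝ) (H x)) x)
    (x₀ : EuclideanSpace ℝ (Fin n)) (hHerm : (H x₀).IsHermitian)
    (hw : ∃ i, 0 < hHerm.eigenvalues i ∧ ⟪hHerm.eigenvectorBasis i, gradient g x₀⟫ ≠ 0)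
    (G : EuclideanSpace ℝ (Fin n) → ℝ)
    (hG : ∀ x, G x = (1 / 2) * ‖gradient g x‖ ^ 2)
    (v : EuclideanSpace ℝ (Fin n))
    (hv : v = -∑ i ∈ Finset.univ.filter (fun i => 0 < hHerm.eigenvalues i),
        ((hHerm.eigenvalues i)⁻¹ * ⟪hHerm.eigenvectorBasis i, gradient g x₀⟫) •
          hHerm.eigenvectorBasis i) :
    ⟪v, gradient g x₀⟫ < 0 ∧
    ⟪v, Matrix.toEuclideanCLM (𝕜 := ℝ) (H x₀) (gradient g x₀)⟫ < 0 ∧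
    ∃ α : ℝ, 0 < α ∧ g (x₀ + α • v) < g x₀ ∧ G (x₀ + α • v) < G x₀ := by
  set w := gradient g x₀ with hwdef
  set L := Matrix.toEuclideanCLM (𝕜 := ℝ) (H x₀) with hLdef
  set S := Finset.univ.filter (fun i => 0 < hHerm.eigenvalues i) with hSdef
  obtain ⟨i₀, hi₀pos, hi₀ne⟩ := hw
  have hi₀S : i₀ ∈ S := by simp [hSdef, hi₀pos]
  have hSpos : ∀ i ∈ S, 0 < hHerm.eigenvalues i := by
    intro i hi; simpa [hSdef] using hi
  -- symmetry of L
  have hsym : ∀ x y, ⟪L x, y⟫ = ⟪x, L y⟫ := by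
    have hsymm := Matrix.isHermitian_iff_isSymmetric.1 hHerm
    intro x y
    have h1 : (L : EuclideanSpace ℝ (Fin n) →ₗ[ℝ] EuclideanSpace ℝ (Fin n))
        = Matrix.toEuclideanLin (H x₀) :=
      Matrix.coe_toEuclideanCLM_eq_toEuclideanLin _
    have := hsymm x y
    rw [← h1] at this
    exact this
  -- L on eigenvectors
  have hLb : ∀ i, L (hHerm.eigenvectorBasis i)
      = hHerm.eigenvalues i • hHerm.eigenvectorBasis i := by
    intro i
    have h2 := hHerm.mulVec_eigenvectorBasis i
    apply (WithLp.equiv 2 _).injective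
    simp only [WithLp.equiv_apply]
    rw [Matrix.ofLp_toEuclideanCLM]
    simpa using h2
  -- first claim
  have hvw : ⟪v, w⟫ = -∑ i ∈ S,
      (hHerm.eigenvalues i)⁻¹ * ⟪hHerm.eigenvectorBasis i, w⟫ ^ 2 := by
    rw [hv, inner_neg_left, sum_inner, neg_inj]
    refine Finset.sum_congr rfl fun i _ => ?_
    rw [real_inner_smul_left]; ring
  have hsum1 : 0 < ∑ i ∈ S,
      (hHerm.eigenvalues i)⁻¹ * ⟪hHerm.eigenvectorBasis i, w⟫ ^ 2 := by
    refine Finset.sum_pos' (fun i hi => ?_) ⟨i₀, hi₀S, ?_⟩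
    · have h1 : (0:ℝ) ≤ (hHerm.eigenvalues i)⁻¹ := le_of_lt (inv_pos.2 (hSpos i hi))
      positivity
    · exact mul_pos (inv_pos.2 hi₀pos) (pow_two_pos_of_ne_zero hi₀ne)
  have claim1 : ⟪v, w⟫ < 0 := by rw [hvw]; linarith
  -- second claim
  have hLv : L v = -∑ i ∈ S, ⟪hHerm.eigenvectorBasis i, w⟫ • hHerm.eigenvectorBasis i := by
    rw [hv, map_neg, map_sum, neg_inj]
    refine Finset.sum_congr rfl fun i hi => ?_
    rw [map_smul, hLb, smul_smul]
    congr 1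
    have hne : hHerm.eigenvalues i ≠ 0 := ne_of_gt (hSpos i hi)
    field_simp
  have hvLw : ⟪v, L w⟫ = -∑ i ∈ S, ⟪hHerm.eigenvectorBasis i, w⟫ ^ 2 := by
    rw [← hsym, hLv, inner_neg_left, sum_inner, neg_inj]
    refine Finset.sum_congr rfl fun i _ => ?_
    rw [real_inner_smul_left]; ring
  have hsum2 : 0 < ∑ i ∈ S, ⟪hHerm.eigenvectorBasis i, w⟫ ^ 2 := by
    exact Finset.sum_pos' (fun i hi => sq_nonneg _) ⟨i₀, hi₀S, pow_two_pos_of_ne_zero hi₀ne⟩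
  have claim2 : ⟪v, L w⟫ < 0 := by rw [hvLw]; linarith
  refine ⟨claim1, claim2, ?_⟩
  -- the line curve
  have hline : HasDerivAt (fun α : ℝ => x₀ + α • v) v 0 := by
    simpa using ((hasDerivAt_id (0:ℝ)).smul_const v).const_add x₀
  -- derivative of φg
  have hgdiff : DifferentiableAt ℝ g x₀ :=
    (hg.differentiable (by norm_num)).differentiableAt
  have hgrad : HasGradientAt g w x₀ := hgdiff.hasGradientAt
  have hfd : HasFDerivAt g (InnerProductSpace.toDual ℝ _ w) x₀ := hgrad.hasFDerivAt
  have hφg : HasDerivAt (fun α : ℝ => g (x₀ + α • v)) ⟪v, w⟫ 0 := by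
    have h0 : x₀ + (0:ℝ) • v = x₀ := by simp
    have hfd' : HasFDerivAt g (InnerProductSpace.toDual ℝ _ w) (x₀ + (0:ℝ) • v) := by
      rw [h0]; exact hfd
    have hcomp := hfd'.comp_hasDerivAt (0:ℝ) hline
    have hval : (InnerProductSpace.toDual ℝ _ w) v = ⟪v, w⟫ := by
      rw [InnerProductSpace.toDual_apply_apply]; exact real_inner_comm v w
    rw [← hval]
    exact hcomp
  -- derivative of γ = ∇g along line
  have hγ : HasDerivAt (fun α : ℝ => gradient g (x₀ + α • v)) (L v) 0 := by
    have h0 : x₀ + (0:ℝ) • v = x₀ := by simp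
    have hHfd : HasFDerivAt (gradient g) L (x₀ + (0:ℝ) • v) := by
      rw [h0]; exact hH x₀
    exact hHfd.comp_hasDerivAt (0:ℝ) hline
  have hγ0 : (fun α : ℝ => gradient g (x₀ + α • v)) 0 = w := by simp [hwdef]
  have hφG : HasDerivAt (fun α : ℝ => G (x₀ + α • v)) ⟪v, L w⟫ 0 := by
    have hinner : HasDerivAt
        (fun α : ℝ => ⟪gradient g (x₀ + α • v), gradient g (x₀ + α • v)⟫)
        (⟪w, L v⟫ + ⟪L v, w⟫) 0 := by
      have h0 : x₀ + (0:ℝ) • v = x₀ := by simp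
      have := HasDerivAt.inner ℝ hγ hγ
      simp only [h0] at this
      exact this
    have heq : (fun α : ℝ => G (x₀ + α • v))
        = fun α : ℝ => (1/2) * ⟪gradient g (x₀ + α • v), gradient g (x₀ + α • v)⟫ := by
      funext α
      rw [hG, real_inner_self_eq_norm_sq]
    rw [heq]
    have := hinner.const_mul (1/2 : ℝ)
    have hd : (1/2 : ℝ) * (⟪w, L v⟫ + ⟪L v, w⟫) = ⟪v, L w⟫ := by
      have e1 : ⟪w, L v⟫ = ⟪v, L w⟫ := by
        exact (real_inner_comm (L v) w).trans (hsym v w)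
      have e2 : ⟪L v, w⟫ = ⟪v, L w⟫ := hsym v w
      rw [e1, e2]; ring
    rw [hd] at this
    exact this
  have ev1 := eventually_lt_of_hasDerivAt_neg hφg claim1
  have ev2 := eventually_lt_of_hasDerivAt_neg hφG claim2
  obtain ⟨α, ⟨hg1, hG1⟩, hα⟩ := ((ev1.and ev2).and self_mem_nhdsWithin).exists
  refine ⟨α, hα, ?_, ?_⟩
  · simpa using hg1
  · simpa using hG1
end

section
/- The function g₁(x,y) = (x²y − x − 1)² + (x² − 1)² on ℝ² has exactly two critical points, namely (1,2) and (−1,0), both of which are local minima; in particular g₁ has two strict local minima and no other critical point (no mountain pass between them). -/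
open ContinuousLinearMap

noncomputable def Dg (p : ℝ × ℝ) : ℝ × ℝ →L[ℝ] ℝ :=
  (2 * (p.1 ^ 2 * p.2 - p.1 - 1) * (2 * p.1 * p.2 - 1) + 2 * (p.1 ^ 2 - 1) * (2 * p.1)) • fst ℝ ℝ ℝ
  + (2 * (p.1 ^ 2 * p.2 - p.1 - 1) * p.1 ^ 2) • snd ℝ ℝ ℝ

lemma hasFDeriv_g (p : ℝ × ℝ) :
    HasFDerivAt (fun p : ℝ × ℝ => (p.1 ^ 2 * p.2 - p.1 - 1) ^ 2 + (p.1 ^ 2 - 1) ^ 2) (Dg p) p := by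
  have h1 : HasFDerivAt (fun p : ℝ × ℝ => p.1) (fst ℝ ℝ ℝ) p := hasFDerivAt_fst
  have h2 : HasFDerivAt (fun p : ℝ × ℝ => p.2) (snd ℝ ℝ ℝ) p := hasFDerivAt_snd
  have hfe : (fun p : ℝ × ℝ => (p.1 ^ 2 * p.2 - p.1 - 1) ^ 2 + (p.1 ^ 2 - 1) ^ 2)
      = fun p : ℝ × ℝ => (p.1 * p.1 * p.2 - p.1 - 1) * (p.1 * p.1 * p.2 - p.1 - 1)
        + (p.1 * p.1 - 1) * (p.1 * p.1 - 1) := by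
    funext p; ring
  rw [hfe]
  have hu : HasFDerivAt (fun p : ℝ × ℝ => p.1 * p.1 * p.2 - p.1 - 1) _ p :=
    (((h1.mul h1).mul h2).sub h1).sub_const 1
  have hv : HasFDerivAt (fun p : ℝ × ℝ => p.1 * p.1 - 1) _ p := (h1.mul h1).sub_const 1
  have := (hu.mul hu).add (hv.mul hv)
  refine this.congr_fderiv ?_
  ext <;> simp [Dg] <;> ring

/-- The function `g₁ (x, y) = (x²y − x − 1)² + (x² − 1)²` has exactly two critical
points, `(1, 2)` and `(−1, 0)`, both strict local minima, and no other critical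
point. -/
theorem stmt_15 (g₁ : ℝ × ℝ → ℝ)
    (hg : ∀ p : ℝ × ℝ, g₁ p = (p.1 ^ 2 * p.2 - p.1 - 1) ^ 2 + (p.1 ^ 2 - 1) ^ 2) :
    (∀ p : ℝ × ℝ, fderiv ℝ g₁ p = 0 ↔ p = (1, 2) ∨ p = (-1, 0)) ∧
    (∀ᶠ q in nhdsWithin (1, 2) {(1, 2)}ᶜ, g₁ (1, 2) < g₁ q) ∧
    (∀ᶠ q in nhdsWithin (-1, 0) {(-1, 0)}ᶜ, g₁ (-1, 0) < g₁ q) := by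
  have hfun : g₁ = fun p : ℝ × ℝ => (p.1 ^ 2 * p.2 - p.1 - 1) ^ 2 + (p.1 ^ 2 - 1) ^ 2 :=
    funext hg
  have hD : ∀ p : ℝ × ℝ, fderiv ℝ g₁ p = Dg p := by
    intro p; rw [hfun]; exact (hasFDeriv_g p).fderiv
  -- positivity away from the two minima
  have hpos : ∀ q : ℝ × ℝ, q ≠ (1, 2) → q ≠ (-1, 0) → 0 < g₁ q := by
    intro q h1 h2
    rw [hg]
    rcases lt_or_eq_of_le (by positivity :
        (0:ℝ) ≤ (q.1 ^ 2 * q.2 - q.1 - 1) ^ 2 + (q.1 ^ 2 - 1) ^ 2) with h | h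
    · exact h
    · exfalso
      have hu : q.1 ^ 2 * q.2 - q.1 - 1 = 0 := by nlinarith [sq_nonneg (q.1 ^ 2 * q.2 - q.1 - 1), sq_nonneg (q.1 ^ 2 - 1)]
      have hv : q.1 ^ 2 - 1 = 0 := by nlinarith [sq_nonneg (q.1 ^ 2 * q.2 - q.1 - 1), sq_nonneg (q.1 ^ 2 - 1)]
      have hx : q.1 = 1 ∨ q.1 = -1 := by
        have : (q.1 - 1) * (q.1 + 1) = 0 := by nlinarith
        rcases mul_eq_zero.mp this with h | h
        · left; linarith
        · right; linarith
      rcases hx with hx | hx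
      · exact h1 (Prod.ext hx (show q.2 = 2 by rw [hx] at hu; ring_nf at hu ⊢; linarith))
      · exact h2 (Prod.ext hx (show q.2 = 0 by rw [hx] at hu; ring_nf at hu ⊢; linarith))
  refine ⟨?_, ?_, ?_⟩
  · intro p
    rw [hD]
    constructor
    · intro h
      have ha : (2 * (p.1 ^ 2 * p.2 - p.1 - 1) * (2 * p.1 * p.2 - 1) + 2 * (p.1 ^ 2 - 1) * (2 * p.1)) = 0 := by
        have := congrArg (fun L : ℝ × ℝ →L[ℝ] ℝ => L (1, 0)) h
        simpa [Dg] using this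
      have hb : 2 * (p.1 ^ 2 * p.2 - p.1 - 1) * p.1 ^ 2 = 0 := by
        have := congrArg (fun L : ℝ × ℝ →L[ℝ] ℝ => L (0, 1)) h
        simpa [Dg] using this
      have hx0 : p.1 ≠ 0 := by
        intro hx; rw [hx] at ha; norm_num at ha
      have hu : p.1 ^ 2 * p.2 - p.1 - 1 = 0 := by
        have h2 : p.1 ^ 2 ≠ 0 := pow_ne_zero 2 hx0
        have := mul_eq_zero.mp hb
        rcases this with h | h
        · rcases mul_eq_zero.mp h with h | h
          · norm_num at h
          · exact h
        · exact absurd h h2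
      have hv : p.1 ^ 2 - 1 = 0 := by
        rw [hu] at ha
        have : (p.1 ^ 2 - 1) * p.1 = 0 := by nlinarith
        rcases mul_eq_zero.mp this with h | h
        · exact h
        · exact absurd h hx0
      have hx : p.1 = 1 ∨ p.1 = -1 := by
        have : (p.1 - 1) * (p.1 + 1) = 0 := by nlinarith
        rcases mul_eq_zero.mp this with h | h
        · left; linarith
        · right; linarith
      rcases hx with hx | hx
      · left; exact Prod.ext hx (show p.2 = 2 by rw [hx] at hu; ring_nf at hu ⊢; linarith)
      · right; exact Prod.ext hx (show p.2 = 0 by rw [hx] at hu; ring_nf at hu ⊢; linarith)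
    · rintro (rfl | rfl) <;> · rw [show (0 : ℝ × ℝ →L[ℝ] ℝ) = (0:ℝ) • fst ℝ ℝ ℝ + (0:ℝ) • snd ℝ ℝ ℝ by simp]; norm_num [Dg]
  · have h12 : g₁ (1, 2) = 0 := by rw [hg]; norm_num
    have hmem : ∀ᶠ q in nhdsWithin ((1:ℝ), (2:ℝ)) {((1:ℝ),(2:ℝ))}ᶜ, q ≠ ((-1:ℝ), (0:ℝ)) := by
      apply eventually_nhdsWithin_of_eventually_nhds
      exact isOpen_compl_singleton.eventually_mem (by norm_num)
    filter_upwards [hmem, self_mem_nhdsWithin] with q hq1 hq2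
    rw [h12]
    exact hpos q hq2 hq1
  · have h12 : g₁ (-1, 0) = 0 := by rw [hg]; norm_num
    have hmem : ∀ᶠ q in nhdsWithin ((-1:ℝ), (0:ℝ)) {((-1:ℝ),(0:ℝ))}ᶜ, q ≠ ((1:ℝ), (2:ℝ)) := by
      apply eventually_nhdsWithin_of_eventually_nhds
      exact isOpen_compl_singleton.eventually_mem (by norm_num)
    filter_upwards [hmem, self_mem_nhdsWithin] with q hq1 hq2
    rw [h12]
    exact hpos q hq1 hq2
end
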